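/- Let P=(x₁,y₁) and Q=(x₂,y₂) be points on the generalized Hessian curve E such that the denominators in the sum and difference formulas are nonzero, and let (x₃,y₃)=P+Q and (x₄,y₄)=P−Q. Set r_P = x₁+y₁ and r_Q = x₂+y₂. If (3r_P + d)·r_Q² + (3r_P² + d·r_P)·r_Q + d·r_P² − 3a ≠ 0, then (x₃+y₃)·(x₄+y₄) = [(d·r_P² − 3a)·r_Q² + (6a·r_P + 2ad)·r_Q − 3a·r_P² + 2ad·r_P + ad²] / [(3r_P + d)·r_Q² + (3r_P² + d·r_P)·r_Q + d·r_P² − 3a]. -/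

import Mathlib

/-- Multiplicative differential addition for the degree-2 compression
`f₂(x,y) = x + y` on the generalized Hessian curve `x³ + y³ + a = d·x·y`. -/
theorem genHessian_deg2_diff_add_mul {K : Type*} [Field K] (a d : K)
    (hchar2 : (2 : K) ≠ 0) (hchar3 : (3 : K) ≠ 0)
    (ha : a ≠ 0) (hd : d ^ 3 ≠ 27 * a)
    (x1 y1 x2 y2 x3 y3 x4 y4 : K)
    (hP : x1 ^ 3 + y1 ^ 3 + a = d * x1 * y1)
    (hQ : x2 ^ 3 + y2 ^ 3 + a = d * x2 * y2)
    (hden1 : x1 * x2 ^ 2 - y2 * y1 ^ 2 ≠ 0)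
    (hden2 : x1 * y2 ^ 2 - x2 * y1 ^ 2 ≠ 0)
    (hx3 : x3 = (a * y1 - x2 * y2 * x1 ^ 2) / (x1 * x2 ^ 2 - y2 * y1 ^ 2))
    (hy3 : y3 = (x1 * y1 * y2 ^ 2 - a * x2) / (x1 * x2 ^ 2 - y2 * y1 ^ 2))
    (hx4 : x4 = (a * y1 - y2 * x2 * x1 ^ 2) / (x1 * y2 ^ 2 - x2 * y1 ^ 2))
    (hy4 : y4 = (x1 * y1 * x2 ^ 2 - a * y2) / (x1 * y2 ^ 2 - x2 * y1 ^ 2))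
    (rP rQ : K) (hrP : rP = x1 + y1) (hrQ : rQ = x2 + y2)
    (hM0 : (3 * rP + d) * rQ ^ 2 + (3 * rP ^ 2 + d * rP) * rQ + d * rP ^ 2 - 3 * a ≠ 0) :
    (x3 + y3) * (x4 + y4) =
      ((d * rP ^ 2 - 3 * a) * rQ ^ 2 + (6 * a * rP + 2 * a * d) * rQ
          - 3 * a * rP ^ 2 + 2 * a * d * rP + a * d ^ 2)
        / ((3 * rP + d) * rQ ^ 2 + (3 * rP ^ 2 + d * rP) * rQ + d * rP ^ 2 - 3 * a) := by
  subst hx3 hy3 hx4 hy4 hrP hrQ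
  rw [← add_div, ← add_div, div_mul_div_comm,
    div_eq_div_iff (mul_ne_zero hden1 hden2) hM0]
  linear_combination ((-3)*y1^2*x2*y2^5 + (-3)*y1^2*x2^2*y2^4 + (-3)*y1^2*x2^4*y2^2 + (-3)*y1^2*x2^5*y2 + (-3)*y1^3*x2*y2^4 + (-3)*y1^3*x2^4*y2 + (-3)*x1*y1*x2*y2^5 + (-3)*x1*y1*x2^2*y2^4 + (-3)*x1*y1*x2^4*y2^2 + (-3)*x1*y1*x2^5*y2 + (-6)*x1*y1^2*x2*y2^4 + (-6)*x1*y1^2*x2^4*y2 + (3)*x1^2*x2^2*y2^4 + (6)*x1^2*x2^3*y2^3 + (3)*x1^2*x2^4*y2^2 + (-3)*x1^2*y1*x2*y2^4 + (3)*x1^2*y1*x2^2*y2^3 + (3)*x1^2*y1*x2^3*y2^2 + (-3)*x1^2*y1*x2^4*y2 + (3)*x1^3*x2^2*y2^3 + (3)*x1^3*x2^3*y2^2 + (-1)*d*y1*x2*y2^5 + (-1)*d*y1*x2^2*y2^4 + (-1)*d*y1*x2^4*y2^2 + (-1)*d*y1*x2^5*y2 + (1)*d*y1^2*y2^5 + (-2)*d*y1^2*x2*y2^4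 + (4)*d*y1^2*x2^2*y2^3 + (4)*d*y1^2*x2^3*y2^2 + (-2)*d*y1^2*x2^4*y2 + (1)*d*y1^2*x2^5 + (-1)*d*y1^3*x2*y2^3 + (1)*d*y1^3*x2^2*y2^2 + (-1)*d*y1^3*x2^3*y2 + (-1)*d*x1*y1*x2*y2^4 + (3)*d*x1*y1*x2^2*y2^3 + (3)*d*x1*y1*x2^3*y2^2 + (-1)*d*x1*y1*x2^4*y2 + (-2)*d*x1*y1^2*x2*y2^3 + (2)*d*x1*y1^2*x2^2*y2^2 + (-2)*d*x1*y1^2*x2^3*y2 + (1)*d*x1^2*x2^2*y2^3 + (1)*d*x1^2*x2^3*y2^2 + (-1)*d*x1^2*y1*x2*y2^3 + (2)*d*x1^2*y1*x2^2*y2^2 + (-1)*d*x1^2*y1*x2^3*y2 + (1)*d*x1^3*x2^2*y2^2 + (1)*d^2*y1*x2^2*y2^3 + (1)*d^2*y1*x2^3*y2^2 + (-1)*d^2*y1^2*x2*y2^3 + (2)*d^2*y1^2*x2^2*y2^2 + (-1)*d^2*y1^2*x2^3*y2 + (1)*d^2*x1*y1*x2^2*y2^2 + (3)*a*x2*y2^4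 + (3)*a*x2^4*y2 + (-3)*a*y1*y2^4 + (6)*a*y1*x2^2*y2^2 + (-3)*a*y1*x2^4 + (-9)*a*y1^2*x2*y2^2 + (-9)*a*y1^2*x2^2*y2 + (3)*a*x1*x2*y2^3 + (6)*a*x1*x2^2*y2^2 + (3)*a*x1*x2^3*y2 + (-6)*a*x1*y1*x2*y2^2 + (-6)*a*x1*y1*x2^2*y2 + (1)*a*d*x2*y2^3 + (-1)*a*d*x2^2*y2^2 + (1)*a*d*x2^3*y2 + (-1)*a*d*y1*y2^3 + (-1)*a*d*y1*x2^3 + (1)*a*d*y1^2*y2^2 + (-4)*a*d*y1^2*x2*y2 + (1)*a*d*y1^2*x2^2 + (1)*a*d*x1*x2*y2^2 + (1)*a*d*x1*x2^2*y2 + (-2)*a*d*x1*y1*x2*y2) * hP + ((3)*y1^5*x2*y2^2 + (3)*y1^5*x2^2*y2 + (3)*y1^6*x2*y2 + (3)*x1*y1^4*x2*y2^2 + (3)*x1*y1^4*x2^2*y2 + (6)*x1*y1^5*x2*y2 + (3)*x1^2*y1^4*x2*y2 + (1)*d*y1^4*x2*y2^2 + (1)*d*y1^4*x2^2*y2 +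 (-1)*d*y1^5*y2^2 + (2)*d*y1^5*x2*y2 + (-1)*d*y1^5*x2^2 + (-3)*d*x1*y1^3*x2*y2^2 + (-3)*d*x1*y1^3*x2^2*y2 + (1)*d*x1*y1^4*y2^2 + (1)*d*x1*y1^4*x2^2 + (-3)*d*x1^2*y1^2*x2*y2^2 + (-3)*d*x1^2*y1^2*x2^2*y2 + (2)*d*x1^2*y1^3*y2^2 + (-2)*d*x1^2*y1^3*x2*y2 + (2)*d*x1^2*y1^3*x2^2 + (-1)*d^2*x1*y1^2*x2*y2^2 + (-1)*d^2*x1*y1^2*x2^2*y2 + (1)*d^2*x1*y1^3*y2^2 + (-2)*d^2*x1*y1^3*x2*y2 + (1)*d^2*x1*y1^3*x2^2 + (-1)*d^2*x1^2*y1^2*x2*y2 + (3)*a*y1^2*x2*y2^2 + (3)*a*y1^2*x2^2*y2 + (3)*a*y1^4*y2 + (3)*a*y1^4*x2 + (3)*a*x1*y1*x2*y2^2 + (3)*a*x1*y1*x2^2*y2 + (-6)*a*x1*y1^2*y2^2 + (-6)*a*x1*y1^2*x2*y2 + (-6)*a*x1*y1^2*x2^2 + (6)*a*x1*y1^3*y2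 + (6)*a*x1*y1^3*x2 + (-3)*a*x1^2*y1*y2^2 + (-3)*a*x1^2*y1*x2^2 + (3)*a*x1^2*y1^2*y2 + (3)*a*x1^2*y1^2*x2 + (1)*a*d*y1*x2*y2^2 + (1)*a*d*y1*x2^2*y2 + (-1)*a*d*y1^2*y2^2 + (2)*a*d*y1^2*x2*y2 + (-1)*a*d*y1^2*x2^2 + (1)*a*d*y1^4 + (-1)*a*d*x1*y1*y2^2 + (2)*a*d*x1*y1*x2*y2 + (-1)*a*d*x1*y1*x2^2 + (-1)*a*d*x1*y1^2*y2 + (-1)*a*d*x1*y1^2*x2 + (2)*a*d*x1*y1^3 + (1)*a*d*x1^2*x2*y2 + (-1)*a*d*x1^2*y1*y2 + (-1)*a*d*x1^2*y1*x2 + (1)*a*d*x1^2*y1^2 + (-3)*a^2*x2*y2 + (3)*a^2*y1*y2 + (3)*a^2*y1*x2 + (-3)*a^2*y1^2) * hQ
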